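/- For the Weierstrass function ℘(z) = ℘(z; 0, -4) satisfying ℘'² = 4℘³ + 4 with ℘(z) ~ z^{-2} as z → 0, the real half-period ϖ := ∫_{-1}^{∞} dw/√(4w³+4) equals (1/6)B(1/3,1/2) + (1/6)B(1/3,1/6) = 2^{-7/3}·3^{1/2}·π^{-1}·Γ(1/3)³. -/

import Mathlib

open MeasureTheory Set Real

lemma beta_aux (a b : ℝ) (ha : 0 < a) (hb : 0 < b) :
    ∀ x ∈ Set.Ioc (0:ℝ) 1,
      ((x:ℂ) ^ ((a:ℂ)-1) * ((1:ℂ)-(x:ℂ)) ^ ((b:ℂ)-1)) = ((x^(a-1) * (1-x)^(b-1) : ℝ) : ℂ) := by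
  intro x hx
  rw [show ((a:ℂ)-1) = ((a-1:ℝ):ℂ) by push_cast; ring,
      show ((b:ℂ)-1) = ((b-1:ℝ):ℂ) by push_cast; ring,
      show ((1:ℂ)-(x:ℂ)) = ((1-x : ℝ):ℂ) by push_cast; ring,
      ← Complex.ofReal_cpow hx.1.le, ← Complex.ofReal_cpow (by linarith [hx.2]),
      ← Complex.ofReal_mul]

lemma betaInt (a b : ℝ) (ha : 0 < a) (hb : 0 < b) :
    IntegrableOn (fun t : ℝ => t^(a-1) * (1-t)^(b-1)) (Set.Ioo 0 1) := by
  have hC : IntegrableOn (fun x : ℝ => (x:ℂ) ^ ((a:ℂ)-1) * ((1:ℂ)-(x:ℂ)) ^ ((b:ℂ)-1))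
      (Set.Ioc 0 1) :=
    (Complex.betaIntegral_convergent (by simpa using ha) (by simpa using hb)).1
  have h2 : IntegrableOn (fun x : ℝ => ((x^(a-1) * (1-x)^(b-1) : ℝ) : ℂ)) (Set.Ioc 0 1) :=
    hC.congr_fun (beta_aux a b ha hb) measurableSet_Ioc
  have h3 : IntegrableOn (fun t : ℝ => t^(a-1) * (1-t)^(b-1)) (Set.Ioc 0 1) := by
    simpa [IntegrableOn] using h2.re
  exact h3.mono_set Set.Ioo_subset_Ioc_self

lemma betaVal (a b : ℝ) (ha : 0 < a) (hb : 0 < b) :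
    ∫ t in Set.Ioo (0:ℝ) 1, t^(a-1) * (1-t)^(b-1)
      = Real.Gamma a * Real.Gamma b / Real.Gamma (a+b) := by
  have key := Complex.Gamma_mul_Gamma_eq_betaIntegral
      (s := (a:ℂ)) (t := (b:ℂ)) (by simpa using ha) (by simpa using hb)
  rw [Complex.betaIntegral] at key
  rw [intervalIntegral.integral_of_le zero_le_one] at key
  rw [setIntegral_congr_fun measurableSet_Ioc (beta_aux a b ha hb)] at key
  rw [show (∫ x in Set.Ioc (0:ℝ) 1, ((x^(a-1) * (1-x)^(b-1) : ℝ) : ℂ))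
      = ((∫ x in Set.Ioc (0:ℝ) 1, x^(a-1) * (1-x)^(b-1) : ℝ) : ℂ) from integral_ofReal] at key
  have hgad : Real.Gamma (a+b) ≠ 0 := (Real.Gamma_pos_of_pos (by linarith)).ne'
  have key2 : Real.Gamma a * Real.Gamma b
      = Real.Gamma (a+b) * ∫ t in Set.Ioc (0:ℝ) 1, t^(a-1) * (1-t)^(b-1) := by
    have := key
    rw [show ((a:ℂ)+(b:ℂ)) = ((a+b:ℝ):ℂ) by push_cast; ring] at this
    rw [Complex.Gamma_ofReal, Complex.Gamma_ofReal, Complex.Gamma_ofReal] at this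
    exact_mod_cast this
  rw [MeasureTheory.integral_Ioc_eq_integral_Ioo] at key2
  rw [key2]
  field_simp


noncomputable def F : ℝ → ℝ := fun w => 1 / Real.sqrt (4 * w ^ 3 + 4)

noncomputable def phiA : ℝ → ℝ := fun t => -(t ^ ((1:ℝ)/3))

noncomputable def phiA' : ℝ → ℝ := fun t => -((1:ℝ)/3 * t ^ ((1:ℝ)/3 - 1))

lemma cube_rpow_third {t : ℝ} (ht : 0 < t) : (t ^ ((1:ℝ)/3)) ^ (3:ℕ) = t := by
  rw [← Real.rpow_natCast (t ^ ((1:ℝ)/3)) 3, ← Real.rpow_mul ht.le]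
  norm_num

lemma phiA_deriv : ∀ t ∈ Set.Ioo (0:ℝ) 1, HasDerivWithinAt phiA (phiA' t) (Set.Ioo 0 1) t := by
  intro t ht
  exact ((Real.hasDerivAt_rpow_const (Or.inl ht.1.ne')).neg).hasDerivWithinAt

lemma phiA_inj : Set.InjOn phiA (Set.Ioo 0 1) := by
  intro x hx y hy h
  have h2 : x ^ ((1:ℝ)/3) = y ^ ((1:ℝ)/3) := by
    have := congrArg Neg.neg h; simpa [phiA] using this
  have h3 := congrArg (fun z => z ^ (3:ℕ)) h2
  rw [cube_rpow_third hx.1, cube_rpow_third hy.1] at h3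
  exact h3

lemma phiA_img : phiA '' Set.Ioo 0 1 = Set.Ioo (-1:ℝ) 0 := by
  ext w
  constructor
  · rintro ⟨t, ht, rfl⟩
    have h1 : 0 < t ^ ((1:ℝ)/3) := Real.rpow_pos_of_pos ht.1 _
    have h2 : t ^ ((1:ℝ)/3) < 1 := Real.rpow_lt_one ht.1.le ht.2 (by norm_num)
    exact ⟨by simp [phiA]; linarith, by simp [phiA]; linarith⟩
  · rintro ⟨h1, h2⟩
    refine ⟨(-w) ^ (3:ℕ), ⟨pow_pos (by linarith) 3, ?_⟩, ?_⟩
    · have : -w < 1 := by linarith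
      calc (-w) ^ (3:ℕ) < 1 ^ (3:ℕ) := by
            apply pow_lt_pow_left₀ this (by linarith) (by norm_num)
        _ = 1 := one_pow 3
    · show -(((-w) ^ (3:ℕ)) ^ ((1:ℝ)/3)) = w
      rw [← Real.rpow_natCast (-w) 3, ← Real.rpow_mul (by linarith : (0:ℝ) ≤ -w)]
      norm_num

lemma pieceA_pointwise : ∀ t ∈ Set.Ioo (0:ℝ) 1,
    |phiA' t| • F (phiA t) = (1/6) * (t ^ ((1:ℝ)/3 - 1) * (1-t) ^ ((1:ℝ)/2 - 1)) := by
  intro t ht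
  have ht1 : (0:ℝ) < 1 - t := by linarith [ht.2]
  have hcube : (4:ℝ) * (phiA t) ^ 3 + 4 = 4 * (1 - t) := by
    have : (phiA t) ^ 3 = -t := by
      show (-(t ^ ((1:ℝ)/3))) ^ 3 = -t
      rw [neg_pow, cube_rpow_third ht.1]
      norm_num
    rw [this]; ring
  have habs : |phiA' t| = (1:ℝ)/3 * t ^ ((1:ℝ)/3 - 1) := by
    have : (0:ℝ) < t ^ ((1:ℝ)/3 - 1) := Real.rpow_pos_of_pos ht.1 _
    rw [phiA', abs_neg, abs_of_pos (by positivity)]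
  have hsqrt : Real.sqrt (4 * (1 - t)) = 2 * (1-t) ^ ((1:ℝ)/2) := by
    rw [Real.sqrt_mul (by norm_num : (0:ℝ) ≤ 4), show (4:ℝ) = 2^2 by norm_num,
      Real.sqrt_sq (by norm_num : (0:ℝ) ≤ 2), Real.sqrt_eq_rpow]
  have hneg : (1-t) ^ ((1:ℝ)/2 - 1) = ((1-t) ^ ((1:ℝ)/2))⁻¹ := by
    rw [show (1:ℝ)/2 - 1 = -(1/2) by norm_num, Real.rpow_neg ht1.le]
  rw [smul_eq_mul, F, hcube, habs, hsqrt, hneg]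
  have : (0:ℝ) < (1-t) ^ ((1:ℝ)/2) := Real.rpow_pos_of_pos ht1 _
  rw [show (2:ℝ) * (1-t)^((1:ℝ)/2) = ((1-t)^((1:ℝ)/2) * 2) by ring, ← div_div]
  ring

lemma pieceA_val : ∫ w in Set.Ioo (-1:ℝ) 0, F w
    = (1/6) * (Real.Gamma (1/3) * Real.Gamma (1/2) / Real.Gamma (1/3 + 1/2)) := by
  rw [← phiA_img,
    MeasureTheory.integral_image_eq_integral_abs_deriv_smul measurableSet_Ioo phiA_deriv phiA_inj F,
    setIntegral_congr_fun measurableSet_Ioo pieceA_pointwise,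
    MeasureTheory.integral_const_mul,
    betaVal (1/3) (1/2) (by norm_num) (by norm_num)]

lemma pieceA_integrable : IntegrableOn F (Set.Ioo (-1:ℝ) 0) := by
  rw [← phiA_img,
    MeasureTheory.integrableOn_image_iff_integrableOn_abs_deriv_smul
      measurableSet_Ioo phiA_deriv phiA_inj F]
  exact MeasureTheory.IntegrableOn.congr_fun
    ((betaInt (1/3) (1/2) (by norm_num) (by norm_num)).const_mul (1/6))
    (fun t ht => (pieceA_pointwise t ht).symm) measurableSet_Ioo

noncomputable def psiB : ℝ → ℝ := fun t => (t / (1-t)) ^ ((1:ℝ)/3)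

noncomputable def psiB' : ℝ → ℝ :=
  fun t => 1/(1-t)^2 * ((1:ℝ)/3) * (t/(1-t)) ^ ((1:ℝ)/3 - 1)

lemma ratio_pos {t : ℝ} (ht : t ∈ Set.Ioo (0:ℝ) 1) : 0 < t / (1-t) :=
  div_pos ht.1 (by linarith [ht.2])

lemma psiB_deriv : ∀ t ∈ Set.Ioo (0:ℝ) 1, HasDerivWithinAt psiB (psiB' t) (Set.Ioo 0 1) t := by
  intro t ht
  have hne : (1:ℝ) - t ≠ 0 := by have := ht.2; intro h; simp at *; linarith
  have h1 : HasDerivAt (fun t:ℝ => t/(1-t)) ((1*(1-t) - t*(-1))/(1-t)^2) t :=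
    (hasDerivAt_id t).div ((hasDerivAt_id t).const_sub 1) hne
  have h1' : HasDerivAt (fun t:ℝ => t/(1-t)) (1/(1-t)^2) t := by
    convert h1 using 1; ring
  have h2 := h1'.rpow_const (p := (1:ℝ)/3) (Or.inl (ratio_pos ht).ne')
  exact h2.hasDerivWithinAt

lemma psiB_inj : Set.InjOn psiB (Set.Ioo 0 1) := by
  intro x hx y hy h
  have h2 := congrArg (fun z => z ^ (3:ℕ)) h
  simp only [psiB] at h2
  rw [cube_rpow_third (ratio_pos hx), cube_rpow_third (ratio_pos hy)] at h2
  have hx1 : (1:ℝ) - x ≠ 0 := by have := hx.2; intro hc; linarith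
  have hy1 : (1:ℝ) - y ≠ 0 := by have := hy.2; intro hc; linarith
  field_simp at h2
  linarith

lemma psiB_img : psiB '' Set.Ioo 0 1 = Set.Ioi (0:ℝ) := by
  ext y; constructor
  · rintro ⟨t, ht, rfl⟩
    exact Set.mem_Ioi.2 (Real.rpow_pos_of_pos (ratio_pos ht) _)
  · intro hy
    have hy' : (0:ℝ) < y := hy
    have h3 : (0:ℝ) < y^(3:ℕ) := pow_pos hy' 3
    refine ⟨y^(3:ℕ)/(1+y^(3:ℕ)), ⟨by positivity, ?_⟩, ?_⟩
    · rw [div_lt_one (by positivity)]; linarith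
    · show (y^(3:ℕ)/(1+y^(3:ℕ)) / (1 - y^(3:ℕ)/(1+y^(3:ℕ)))) ^ ((1:ℝ)/3) = y
      have hne : (1:ℝ) + y^(3:ℕ) ≠ 0 := by positivity
      have hsimp : y^(3:ℕ)/(1+y^(3:ℕ)) / (1 - y^(3:ℕ)/(1+y^(3:ℕ))) = y^(3:ℕ) := by
        field_simp
        ring
      rw [hsimp, ← Real.rpow_natCast y 3, ← Real.rpow_mul hy'.le]
      norm_num

lemma pieceB_pointwise : ∀ t ∈ Set.Ioo (0:ℝ) 1,
    |psiB' t| • F (psiB t) = 1/6 * (t ^ ((1:ℝ)/3 - 1) * (1-t) ^ ((1:ℝ)/6 - 1)) := by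
  intro t ht
  have hu : (0:ℝ) < 1 - t := by linarith [ht.2]
  have hr := ratio_pos ht
  have hcube : (4:ℝ) * (psiB t)^3 + 4 = 4 * (1-t)⁻¹ := by
    show (4:ℝ) * ((t/(1-t)) ^ ((1:ℝ)/3))^(3:ℕ) + 4 = 4 * (1-t)⁻¹
    rw [cube_rpow_third hr]
    field_simp
    ring
  have hF : F (psiB t) = (1-t) ^ ((1:ℝ)/2) / 2 := by
    rw [F, hcube, Real.sqrt_mul (by norm_num : (0:ℝ) ≤ 4), show (4:ℝ) = 2^2 by norm_num,
      Real.sqrt_sq (by norm_num : (0:ℝ) ≤ 2), Real.sqrt_inv, Real.sqrt_eq_rpow]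
    rw [one_div, mul_inv, inv_inv]
    ring
  have hd1 : (0:ℝ) < 1/(1-t)^2 := div_pos one_pos (pow_pos hu 2)
  have hd2 : (0:ℝ) < (t/(1-t)) ^ ((1:ℝ)/3 - 1) := Real.rpow_pos_of_pos hr _
  have habs : |psiB' t| = psiB' t :=
    abs_of_pos (by rw [psiB']; exact mul_pos (mul_pos hd1 (by norm_num)) hd2)
  rw [smul_eq_mul, habs, hF, psiB', Real.div_rpow ht.1.le hu.le]
  have e1 : ((1-t):ℝ)^(2:ℕ) = (1-t)^((2:ℝ)) := by
    rw [← Real.rpow_natCast (1-t) 2]; norm_num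
  rw [e1, one_div, ← Real.rpow_neg hu.le, div_eq_mul_inv (t ^ ((1:ℝ)/3-1)),
    ← Real.rpow_neg hu.le]
  have hsplit : (1-t) ^ ((1:ℝ)/6 - 1)
      = (1-t)^(-(2:ℝ)) * ((1-t)^(-((1:ℝ)/3-1)) * (1-t)^((1:ℝ)/2)) := by
    rw [← Real.rpow_add hu, ← Real.rpow_add hu]; norm_num
  rw [hsplit]; ring

lemma pieceB_val : ∫ w in Set.Ioi (0:ℝ), F w
    = (1/6) * (Real.Gamma (1/3) * Real.Gamma (1/6) / Real.Gamma (1/3 + 1/6)) := by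
  rw [← psiB_img,
    MeasureTheory.integral_image_eq_integral_abs_deriv_smul measurableSet_Ioo psiB_deriv psiB_inj F,
    setIntegral_congr_fun measurableSet_Ioo pieceB_pointwise,
    MeasureTheory.integral_const_mul,
    betaVal (1/3) (1/6) (by norm_num) (by norm_num)]

lemma pieceB_integrable : IntegrableOn F (Set.Ioi (0:ℝ)) := by
  rw [← psiB_img,
    MeasureTheory.integrableOn_image_iff_integrableOn_abs_deriv_smul
      measurableSet_Ioo psiB_deriv psiB_inj F]
  exact MeasureTheory.IntegrableOn.congr_fun
    ((betaInt (1/3) (1/6) (by norm_num) (by norm_num)).const_mul (1/6))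
    (fun t ht => (pieceB_pointwise t ht).symm) measurableSet_Ioo


lemma gammaAlg :
    (1/6) * (Real.Gamma (1/3) * Real.Gamma (1/2) / Real.Gamma (1/3 + 1/2)) +
    (1/6) * (Real.Gamma (1/3) * Real.Gamma (1/6) / Real.Gamma (1/3 + 1/6)) =
    (2:ℝ) ^ (-(7:ℝ)/3) * Real.sqrt 3 / Real.pi * Real.Gamma (1/3) ^ 3 := by
  have hπ : (0:ℝ) < π := pi_pos
  set G := Real.Gamma (1/3) with hGdef
  set A := Real.Gamma (1/6) with hAdef
  set B := Real.Gamma (2/3) with hBdef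
  set C := Real.Gamma (5/6) with hCdef
  set sπ := Real.sqrt π with hsπdef
  set s3 := Real.sqrt 3 with hs3def
  set T := (2:ℝ) ^ ((2:ℝ)/3) with hTdef
  have hGpos : 0 < G := Real.Gamma_pos_of_pos (by norm_num)
  have hApos : 0 < A := Real.Gamma_pos_of_pos (by norm_num)
  have hBpos : 0 < B := Real.Gamma_pos_of_pos (by norm_num)
  have hCpos : 0 < C := Real.Gamma_pos_of_pos (by norm_num)
  have hsπpos : 0 < sπ := Real.sqrt_pos.2 hπ
  have hs3pos : 0 < s3 := Real.sqrt_pos.2 (by norm_num)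
  have hsπ2 : sπ ^ 2 = π := Real.sq_sqrt hπ.le
  have hAC : A * C = 2 * π := by
    have h := Real.Gamma_mul_Gamma_one_sub (1/6)
    rw [show (1:ℝ) - 1/6 = 5/6 by norm_num, show π * (1/6) = π/6 by ring,
      Real.sin_pi_div_six] at h
    rw [← hAdef, ← hCdef] at h
    rw [h]; ring
  have hGB : G * B = 2 * π / s3 := by
    have h := Real.Gamma_mul_Gamma_one_sub (1/3)
    rw [show (1:ℝ) - 1/3 = 2/3 by norm_num, show π * (1/3) = π/3 by ring,
      Real.sin_pi_div_three] at h
    rw [← hGdef, ← hBdef] at h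
    rw [h, ← hs3def]
    rw [div_div_eq_mul_div, div_eq_div_iff (by positivity) hs3pos.ne']
    ring
  have hdup : A * B = G * T * sπ := by
    have h := Real.Gamma_mul_Gamma_add_half (1/6)
    rw [show (1:ℝ)/6 + 1/2 = 2/3 by norm_num, show (2:ℝ) * (1/6) = 1/3 by norm_num,
      show (1:ℝ) - 1/3 = 2/3 by norm_num] at h
    rw [← hAdef, ← hBdef, ← hGdef, ← hTdef, ← hsπdef] at h
    exact h
  have h278 : (2:ℝ) ^ (-(7:ℝ)/3) = T / 8 := by
    rw [show -(7:ℝ)/3 = 2/3 + (-3:ℤ) by push_cast; norm_num,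
      Real.rpow_add two_pos, Real.rpow_intCast, ← hTdef]
    norm_num [mul_one_div]
  have hhalf : Real.Gamma (1/2) = sπ := Real.Gamma_one_half_eq
  have hGB' : G * B * s3 = 2 * π := by
    rw [hGB, div_mul_cancel₀ _ hs3pos.ne']
  have hB : B = 2 * π / (s3 * G) := by
    rw [eq_div_iff (by positivity)]
    linear_combination hGB'
  have hA : A = s3 * G^2 * T * sπ / (2*π) := by
    have h1 : A * (2*π/(s3*G)) = G * T * sπ := by rw [← hB]; exact hdup
    have h2 := congrArg (· * (s3*G)) h1
    rw [mul_assoc, div_mul_cancel₀ _ (by positivity : (s3*G) ≠ 0)] at h2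
    rw [eq_div_iff (by positivity)]
    linear_combination h2
  have hC : C = 2*π/A := by
    rw [eq_div_iff hApos.ne']
    linear_combination hAC
  rw [show (1:ℝ)/3 + 1/2 = 5/6 by norm_num, show (1:ℝ)/3 + 1/6 = 1/2 by norm_num,
    ← hCdef, hhalf, h278, hC, hA, ← hsπ2]
  have hsπne : sπ ≠ 0 := hsπpos.ne'
  field_simp
  ring

theorem stmt_10 :
    (∫ w in Set.Ioi (-1:ℝ), 1 / Real.sqrt (4 * w ^ 3 + 4)) =
      (1/6) * (Real.Gamma (1/3) * Real.Gamma (1/2) / Real.Gamma (1/3 + 1/2)) +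
      (1/6) * (Real.Gamma (1/3) * Real.Gamma (1/6) / Real.Gamma (1/3 + 1/6)) ∧
    (∫ w in Set.Ioi (-1:ℝ), 1 / Real.sqrt (4 * w ^ 3 + 4)) =
      (2:ℝ) ^ (-(7:ℝ)/3) * Real.sqrt 3 / Real.pi * Real.Gamma (1/3) ^ 3 := by
  have hval : (∫ w in Set.Ioi (-1:ℝ), F w) =
      (1/6) * (Real.Gamma (1/3) * Real.Gamma (1/2) / Real.Gamma (1/3 + 1/2)) +
      (1/6) * (Real.Gamma (1/3) * Real.Gamma (1/6) / Real.Gamma (1/3 + 1/6)) := by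
    have hsplit : Set.Ioc (-1:ℝ) 0 ∪ Set.Ioi 0 = Set.Ioi (-1:ℝ) :=
      Set.Ioc_union_Ioi_eq_Ioi (by norm_num)
    have hIocInt : IntegrableOn F (Set.Ioc (-1:ℝ) 0) := by
      rw [integrableOn_Ioc_iff_integrableOn_Ioo]
      exact pieceA_integrable
    rw [← hsplit,
      MeasureTheory.setIntegral_union (Set.Ioc_disjoint_Ioi le_rfl) measurableSet_Ioi
        hIocInt pieceB_integrable,
      MeasureTheory.integral_Ioc_eq_integral_Ioo, pieceA_val, pieceB_val]
  exact ⟨hval, hval.trans gammaAlg⟩
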